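/- arXiv:2505.00347 — 6 statements merged into one kernel-verified Lean document; each statement's English description precedes it below -/
import Mathlib

section
/- Let y_0 < y_1 < ... < y_N be strictly increasing quantization levels with |y_k| ≤ 1 for all k, let β ∈ [0,1), let Δ_t, Δ_{t+1} > 0 be scale factors, let q be an interior index (0 < q < N) with radius r = (1/2)·min(y_q − y_{q−1}, y_{q+1} − y_q), and let z be a real signal. If r ≥ (1−β)·|z/Δ_{t+1} − y_q| + |Δ_t/Δ_{t+1} − 1|, then the quantized EMA state remains unchanged; that is, setting u = (β·y_q·Δ_t + (1−β)·z)/Δ_{t+1}, one has |u − y_q| ≤ |u − y_k| for every k ∈ {0,...,N}, so q minimizes the nearest-rounding objective. -/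
/-- **Signal Swamping** (Theorem 3.1).
Let `y 0 < y 1 < ... < y N` be strictly increasing quantization levels with `|y k| ≤ 1`,
`β ∈ [0,1)`, `Δt, Δt1 > 0` scale factors, `q` an interior index with radius
`r = (1/2) · min (y q − y (q−1)) (y (q+1) − y q)`, and `z` a real signal.
If `r ≥ (1−β)·|z/Δt1 − y q| + |Δt/Δt1 − 1|`, then the quantized EMA state remains
unchanged: with `u = (β·y q·Δt + (1−β)·z)/Δt1`, the level `y q` is a nearest level to `u`. -/
theorem signal_swamping
    (N : ℕ) (y : ℕ → ℝ)
    (hmono : ∀ k, k < N → y k < y (k + 1))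
    (hbound : ∀ k, k ≤ N → |y k| ≤ 1)
    (β : ℝ) (hβ0 : 0 ≤ β) (hβ1 : β < 1)
    (Δt Δt1 : ℝ) (hΔt : 0 < Δt) (hΔt1 : 0 < Δt1)
    (q : ℕ) (hq0 : 0 < q) (hqN : q < N)
    (z : ℝ)
    (hr : (1 - β) * |z / Δt1 - y q| + |Δt / Δt1 - 1|
        ≤ (1 / 2) * min (y q - y (q - 1)) (y (q + 1) - y q)) :
    ∀ k, k ≤ N →
      |(β * y q * Δt + (1 - β) * z) / Δt1 - y q|
        ≤ |(β * y q * Δt + (1 - β) * z) / Δt1 - y k| := by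
  have hmono' : ∀ j, j ≤ N → ∀ i, i ≤ j → y i ≤ y j := by
    intro j
    induction j with
    | zero => intro _ i hi; have : i = 0 := Nat.le_zero.mp hi; rw [this]
    | succ m ih =>
      intro hm i hi
      rcases Nat.eq_or_lt_of_le hi with h | h
      · rw [h]
      · exact (ih (by omega) i (by omega)).trans (hmono m (by omega)).le
  set u : ℝ := (β * y q * Δt + (1 - β) * z) / Δt1 with hu
  set r : ℝ := (1 / 2) * min (y q - y (q - 1)) (y (q + 1) - y q) with hrdef
  have hdecomp : u - y q = β * y q * (Δt / Δt1 - 1) + (1 - β) * (z / Δt1 - y q) := by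
    rw [hu]; field_simp; ring
  have hkey : |u - y q| ≤ r := by
    rw [hdecomp]
    calc |β * y q * (Δt / Δt1 - 1) + (1 - β) * (z / Δt1 - y q)|
        ≤ |β * y q * (Δt / Δt1 - 1)| + |(1 - β) * (z / Δt1 - y q)| := abs_add_le _ _
      _ = β * |y q| * |Δt / Δt1 - 1| + (1 - β) * |z / Δt1 - y q| := by
          rw [abs_mul, abs_mul, abs_mul, abs_of_nonneg hβ0,
            abs_of_nonneg (by linarith : (0:ℝ) ≤ 1 - β)]
      _ ≤ 1 * |Δt / Δt1 - 1| + (1 - β) * |z / Δt1 - y q| := by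
          gcongr
          have h1 : |y q| ≤ 1 := hbound q hqN.le
          nlinarith [abs_nonneg (y q)]
      _ = (1 - β) * |z / Δt1 - y q| + |Δt / Δt1 - 1| := by ring
      _ ≤ r := hr
  have habs := abs_le.mp hkey
  intro k hk
  rcases lt_trichotomy k q with h | h | h
  · -- k < q : y k ≤ y (q-1) ≤ y q - 2r
    have h1 : y k ≤ y (q - 1) := hmono' (q - 1) (by omega) k (by omega)
    have h2 : 2 * r ≤ y q - y (q - 1) := by
      have := min_le_left (y q - y (q - 1)) (y (q + 1) - y q)
      rw [hrdef]; linarith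
    have : r ≤ u - y k := by linarith
    calc |u - y q| ≤ r := hkey
      _ ≤ u - y k := this
      _ ≤ |u - y k| := le_abs_self _
  · rw [h]
  · -- q < k : y (q+1) ≤ y k, y q + 2r ≤ y (q+1)
    have h1 : y (q + 1) ≤ y k := hmono' k hk (q + 1) (by omega)
    have h2 : 2 * r ≤ y (q + 1) - y q := by
      have := min_le_right (y q - y (q - 1)) (y (q + 1) - y q)
      rw [hrdef]; linarith
    have : r ≤ y k - u := by linarith
    calc |u - y q| ≤ r := hkey
      _ ≤ y k - u := this
      _ = -(u - y k) := by ring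
      _ ≤ |u - y k| := neg_le_abs _
end

section
/- Let y_0 < y_1 < ... < y_N be strictly increasing quantization levels contained in [−1, 1], let β ∈ [0,1), let Δ > 0 be a scale factor that is unchanged across the update (Δ_{t+1} = Δ_t = Δ), and let q be an interior index (0 < q < N) whose radius r_q = (1/2)·min(y_q − y_{q−1}, y_{q+1} − y_q) satisfies r_q ≥ 2(1−β). Then for every signal z with |z| ≤ Δ, the quantized state remains unchanged: setting u = (β·y_q·Δ + (1−β)·z)/Δ, one has |u − y_q| ≤ |u − y_k| for every k ∈ {0,...,N}. -/
/-- With levels in `[-1,1]`, fixed scale `Δ`, and an interior index `q` whose radius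
`r_q = (1/2)·min (y q − y (q−1)) (y (q+1) − y q)` satisfies `r_q ≥ 2(1−β)`, any signal
`z` with `|z| ≤ Δ` is swamped: the quantized EMA state remains unchanged. -/
theorem signal_swamping_fixed_scale_signed
    (N : ℕ) (y : ℕ → ℝ)
    (hmono : ∀ k, k < N → y k < y (k + 1))
    (hbound : ∀ k, k ≤ N → |y k| ≤ 1)
    (β : ℝ) (hβ0 : 0 ≤ β) (hβ1 : β < 1)
    (Δ : ℝ) (hΔ : 0 < Δ)
    (q : ℕ) (hq0 : 0 < q) (hqN : q < N)
    (hr : 2 * (1 - β) ≤ (1 / 2) * min (y q - y (q - 1)) (y (q + 1) - y q)) :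
    ∀ z : ℝ, |z| ≤ Δ →
      ∀ k, k ≤ N →
        |(β * y q * Δ + (1 - β) * z) / Δ - y q|
          ≤ |(β * y q * Δ + (1 - β) * z) / Δ - y k| := by
  intro z hz k hkN
  -- weak monotonicity of y on [0, N]
  have hmono' : ∀ i j, i ≤ j → j ≤ N → y i ≤ y j := by
    intro i j hij hjN
    induction j with
    | zero => simp_all
    | succ n ih =>
      rcases Nat.lt_or_ge i (n + 1) with h | h
      · exact le_trans (ih (Nat.lt_succ_iff.mp h) (Nat.le_of_succ_le hjN))
          (le_of_lt (hmono n (Nat.lt_of_succ_le hjN)))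
      · have : i = n + 1 := le_antisymm hij h
        simp [this]
  set r := (1 / 2) * min (y q - y (q - 1)) (y (q + 1) - y q) with hrdef
  set u := (β * y q * Δ + (1 - β) * z) / Δ with hudef
  have huy : u - y q = (1 - β) * (z / Δ - y q) := by
    rw [hudef]; field_simp; ring
  have hzΔ : |z / Δ| ≤ 1 := by
    rw [abs_div, abs_of_pos hΔ, div_le_one hΔ]; exact hz
  have hyq1 : |y q| ≤ 1 := hbound q (le_of_lt hqN)
  have h1β : (0:ℝ) ≤ 1 - β := by linarith
  have hclose : |u - y q| ≤ 2 * (1 - β) := by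
    rw [huy, abs_mul, abs_of_nonneg h1β]
    have : |z / Δ - y q| ≤ 2 := by
      calc |z / Δ - y q| ≤ |z / Δ| + |y q| := abs_sub _ _
        _ ≤ 2 := by linarith
    nlinarith
  have hclose' : |u - y q| ≤ r := le_trans hclose hr
  -- gap bounds
  have hgapL : y (q - 1) ≤ y q - 2 * r := by
    have : 2 * r ≤ y q - y (q - 1) := by
      have := min_le_left (y q - y (q - 1)) (y (q + 1) - y q)
      rw [hrdef]; linarith
    linarith
  have hgapR : y q + 2 * r ≤ y (q + 1) := by
    have : 2 * r ≤ y (q + 1) - y q := by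
      have := min_le_right (y q - y (q - 1)) (y (q + 1) - y q)
      rw [hrdef]; linarith
    linarith
  rcases lt_trichotomy k q with hk | hk | hk
  · -- k < q : y k ≤ y (q-1) ≤ y q - 2r
    have hyk : y k ≤ y q - 2 * r := by
      have h1 : y k ≤ y (q - 1) := by
        apply hmono' k (q - 1) (Nat.le_sub_one_of_lt hk)
        omega
      linarith
    have h1 : |u - y q| ≤ r := hclose'
    have h2 : y q - r ≤ u := by
      have := abs_le.mp h1; linarith [this.1]
    have h3 : u - y k ≥ r := by linarith
    calc |u - y q| ≤ r := hclose'
      _ ≤ |u - y k| := le_trans h3 (le_abs_self _)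
  · simp [hk]
  · -- k > q
    have hyk : y q + 2 * r ≤ y k := by
      have h1 : y (q + 1) ≤ y k := hmono' (q + 1) k hk hkN
      linarith
    have h2 : u ≤ y q + r := by
      have := abs_le.mp hclose'; linarith [this.2]
    have h3 : y k - u ≥ r := by linarith
    calc |u - y q| ≤ r := hclose'
      _ ≤ |u - y k| := by rw [abs_sub_comm]; exact le_trans h3 (le_abs_self _)
end

section
/- Let y_0 < y_1 < ... < y_N be strictly increasing quantization levels contained in [0, 1] (unsigned quantization), let β ∈ [0,1), let Δ > 0 be a scale factor that is unchanged across the update, and let q be an interior index (0 < q < N) whose radius r_q = (1/2)·min(y_q − y_{q−1}, y_{q+1} − y_q) satisfies r_q ≥ 1−β. Then for every signal z with 0 ≤ z ≤ Δ, the quantized state remains unchanged: setting u = (β·y_q·Δ + (1−β)·z)/Δ, one has |u − y_q| ≤ |u − y_k| for every k ∈ {0,...,N}. -/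
private lemma ema_mono_aux (N : ℕ) (y : ℕ → ℝ)
    (hmono : ∀ k, k < N → y k < y (k + 1)) :
    ∀ i j, i ≤ j → j ≤ N → y i ≤ y j := by
  intro i j hij hjN
  induction j with
  | zero => simp_all
  | succ n ih =>
    rcases Nat.lt_or_ge i (n+1) with h | h
    · have : y i ≤ y n := ih (Nat.lt_succ_iff.mp h) (le_of_lt hjN)
      exact this.trans (le_of_lt (hmono n hjN))
    · have : i = n + 1 := le_antisymm hij h
      simp [this]

/-- Unsigned version: with levels in `[0,1]`, fixed scale `Δ`, and an interior index `q`
whose radius `r_q = (1/2)·min (y q − y (q−1)) (y (q+1) − y q)` satisfies `r_q ≥ 1−β`,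
any signal `z` with `0 ≤ z ≤ Δ` is swamped: the quantized EMA state remains unchanged. -/
theorem signal_swamping_fixed_scale_unsigned
    (N : ℕ) (y : ℕ → ℝ)
    (hmono : ∀ k, k < N → y k < y (k + 1))
    (hbound : ∀ k, k ≤ N → y k ∈ Set.Icc (0 : ℝ) 1)
    (β : ℝ) (hβ0 : 0 ≤ β) (hβ1 : β < 1)
    (Δ : ℝ) (hΔ : 0 < Δ)
    (q : ℕ) (hq0 : 0 < q) (hqN : q < N)
    (hr : 1 - β ≤ (1 / 2) * min (y q - y (q - 1)) (y (q + 1) - y q)) :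
    ∀ z : ℝ, 0 ≤ z → z ≤ Δ →
      ∀ k, k ≤ N →
        |(β * y q * Δ + (1 - β) * z) / Δ - y q|
          ≤ |(β * y q * Δ + (1 - β) * z) / Δ - y k| := by
  intro z hz0 hzΔ k hkN
  set u : ℝ := (β * y q * Δ + (1 - β) * z) / Δ with hu
  set r : ℝ := (1 / 2) * min (y q - y (q - 1)) (y (q + 1) - y q) with hrdef
  have hqle : q ≤ N := le_of_lt hqN
  have hyq := hbound q hqle
  have htub : z / Δ ≤ 1 := (div_le_one hΔ).mpr hzΔ
  have htlb : 0 ≤ z / Δ := div_nonneg hz0 (le_of_lt hΔ)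
  have hueq : u = β * y q + (1 - β) * (z / Δ) := by
    rw [hu, add_div, mul_div_cancel_right₀ _ hΔ.ne', mul_div_assoc]
  have hd : |u - y q| ≤ r := by
    have h1 : u - y q = (1 - β) * (z / Δ - y q) := by rw [hueq]; ring
    have h2 : |z / Δ - y q| ≤ 1 := by
      rw [abs_le]; constructor <;> [linarith [hyq.2]; linarith [hyq.1]]
    calc |u - y q| = (1 - β) * |z / Δ - y q| := by
          rw [h1, abs_mul, abs_of_nonneg (by linarith : (0:ℝ) ≤ 1 - β)]
      _ ≤ (1 - β) * 1 := by
          apply mul_le_mul_of_nonneg_left h2 (by linarith)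
      _ ≤ r := by linarith
  have hdabs := abs_le.mp hd
  have hrl : r ≤ (1/2) * (y q - y (q - 1)) := by
    have := min_le_left (y q - y (q - 1)) (y (q + 1) - y q)
    rw [hrdef]; nlinarith
  have hrr : r ≤ (1/2) * (y (q + 1) - y q) := by
    have := min_le_right (y q - y (q - 1)) (y (q + 1) - y q)
    rw [hrdef]; nlinarith
  rcases lt_trichotomy k q with hk | hk | hk
  · -- k < q, so k ≤ q - 1
    have hk' : k ≤ q - 1 := Nat.le_sub_one_of_lt hk
    have hle : y k ≤ y (q - 1) :=
      ema_mono_aux N y hmono k (q - 1) hk' (by omega)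
    have : r ≤ u - y k := by linarith
    calc |u - y q| ≤ r := hd
      _ ≤ u - y k := this
      _ ≤ |u - y k| := le_abs_self _
  · subst hk; exact le_refl _
  · -- k > q, so q + 1 ≤ k
    have hle : y (q + 1) ≤ y k :=
      ema_mono_aux N y hmono (q + 1) k hk hkN
    have : r ≤ y k - u := by linarith
    calc |u - y q| ≤ r := hd
      _ ≤ y k - u := this
      _ ≤ |u - y k| := by rw [abs_sub_comm]; exact le_abs_self _
end

section
/- Consider b-bit unsigned linear quantization with levels y_k = k/(2^b − 1) for k ∈ {0, 1, ..., 2^b − 1}, where b ≥ 2 is a natural number. Suppose the scale factor Δ > 0 is unchanged across the update and the momentum satisfies β ≥ 1 − 1/(2(2^b − 1)) with β < 1. Then for every stored index q ∈ {0,...,2^b − 1} and every signal z with 0 ≤ z ≤ Δ, the quantized EMA state remains unchanged: setting u = (β·y_q·Δ + (1−β)·z)/Δ, one has |u − y_q| ≤ |u − y_k| for every k ∈ {0,...,2^b − 1}. In particular, for b = 2 any β ≥ 5/6 ≈ 0.833 causes every received signal to be swamped. -/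
/-- `b`-bit unsigned linear quantization with levels `y k = k/(2^b − 1)`, `k = 0,…,2^b − 1`,
`b ≥ 2`: if the scale `Δ > 0` is unchanged and `β ≥ 1 − 1/(2(2^b − 1))` with `β < 1`,
then every stored index `q` and every signal `0 ≤ z ≤ Δ` is swamped — the quantized EMA
state remains unchanged. (In particular, for `b = 2` any `β ≥ 5/6` suffices.) -/
theorem signal_swamping_unsigned_linear
    (b : ℕ) (hb : 2 ≤ b)
    (Δ : ℝ) (hΔ : 0 < Δ)
    (β : ℝ) (hβlo : 1 - 1 / (2 * ((2 : ℝ) ^ b - 1)) ≤ β) (hβ1 : β < 1) :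
    ∀ q : ℕ, q ≤ 2 ^ b - 1 →
      ∀ z : ℝ, 0 ≤ z → z ≤ Δ →
        ∀ k : ℕ, k ≤ 2 ^ b - 1 →
          |(β * ((q : ℝ) / ((2 : ℝ) ^ b - 1)) * Δ + (1 - β) * z) / Δ
              - (q : ℝ) / ((2 : ℝ) ^ b - 1)|
            ≤ |(β * ((q : ℝ) / ((2 : ℝ) ^ b - 1)) * Δ + (1 - β) * z) / Δ
              - (k : ℝ) / ((2 : ℝ) ^ b - 1)| := by
  intro q hq z hz0 hzΔ k hk
  set N : ℝ := (2:ℝ)^b - 1 with hNdef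
  have h4 : (4:ℝ) ≤ (2:ℝ)^b := by
    calc (4:ℝ) = 2^2 := by norm_num
    _ ≤ 2^b := pow_le_pow_right₀ (by norm_num) hb
  have hN3 : (3:ℝ) ≤ N := by rw [hNdef]; linarith
  have hN0 : (0:ℝ) < N := by linarith
  set u : ℝ := (β * ((q : ℝ) / N) * Δ + (1 - β) * z) / Δ with hu
  have hueq : u = β * ((q:ℝ)/N) + (1-β) * (z/Δ) := by
    rw [hu]; field_simp
  have hdq : u - (q:ℝ)/N = (1-β) * (z/Δ - (q:ℝ)/N) := by rw [hueq]; ring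
  have hzd0 : 0 ≤ z/Δ := div_nonneg hz0 hΔ.le
  have hzd1 : z/Δ ≤ 1 := (div_le_one hΔ).mpr hzΔ
  have hyq0 : 0 ≤ (q:ℝ)/N := div_nonneg (Nat.cast_nonneg q) hN0.le
  have hcast : ((2^b - 1 : ℕ) : ℝ) = N := by
    rw [hNdef, Nat.cast_sub (Nat.one_le_two_pow)]; push_cast; ring
  have hyq1 : (q:ℝ)/N ≤ 1 := by
    rw [div_le_one hN0]
    have : (q:ℝ) ≤ ((2^b - 1 : ℕ) : ℝ) := Nat.cast_le.mpr hq
    linarith [hcast ▸ this]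
  have h1β0 : (0:ℝ) ≤ 1 - β := by linarith
  have hbound : |u - (q:ℝ)/N| ≤ 1 - β := by
    rw [hdq, abs_mul, abs_of_nonneg h1β0]
    have h1 : |z/Δ - (q:ℝ)/N| ≤ 1 := abs_le.mpr ⟨by linarith, by linarith⟩
    nlinarith [abs_nonneg (z/Δ - (q:ℝ)/N)]
  have h1β : 1 - β ≤ 1/(2*N) := by
    have := hβlo; rw [hNdef] at *; linarith
  by_cases hkq : k = q
  · subst hkq; exact le_refl _
  · have hne : ((k:ℤ) - (q:ℤ)) ≠ 0 := by
      intro h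
      exact hkq (by omega)
    have h1int : (1:ℤ) ≤ |(k:ℤ) - (q:ℤ)| := Int.one_le_abs hne
    have h1r : (1:ℝ) ≤ |(k:ℝ) - (q:ℝ)| := by
      have : ((1:ℤ):ℝ) ≤ ((|(k:ℤ) - (q:ℤ)|:ℤ):ℝ) := Int.cast_le.mpr h1int
      push_cast at this
      simpa using this
    have hsep : 1/N ≤ |(k:ℝ)/N - (q:ℝ)/N| := by
      rw [div_sub_div_same, abs_div, abs_of_pos hN0]
      gcongr
    have htri : |(k:ℝ)/N - (q:ℝ)/N| ≤ |u - (k:ℝ)/N| + |u - (q:ℝ)/N| := by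
      calc |(k:ℝ)/N - (q:ℝ)/N| = |((k:ℝ)/N - u) + (u - (q:ℝ)/N)| := by ring_nf
      _ ≤ |(k:ℝ)/N - u| + |u - (q:ℝ)/N| := abs_add_le _ _
      _ = |u - (k:ℝ)/N| + |u - (q:ℝ)/N| := by rw [abs_sub_comm]
    have hNinv : 1 - β ≤ 1/(2*N) := h1β
    have h2N : 1/N - 1/(2*N) = 1/(2*N) := by
      field_simp
      ring
    calc |u - (q:ℝ)/N| ≤ 1 - β := hbound
    _ ≤ 1/(2*N) := h1β
    _ = 1/N - 1/(2*N) := h2N.symm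
    _ ≤ |u - (k:ℝ)/N| := by linarith [htri, hsep, hbound, h1β]
end

section
/- Consider b-bit signed linear quantization with levels y_k = (k − M)/M for k ∈ {0, 1, ..., 2M}, where M = 2^{b−1} − 1 and b ≥ 3 is a natural number (so the levels are 0, ±1/M, ..., ±1). Suppose the scale factor Δ > 0 is unchanged across the update and the momentum satisfies β ≥ 1 − 1/(4(2^{b−1} − 1)) with β < 1. Then for every stored index q ∈ {0,...,2M} and every signal z with |z| ≤ Δ, the quantized EMA state remains unchanged: setting u = (β·y_q·Δ + (1−β)·z)/Δ, one has |u − y_q| ≤ |u − y_k| for every k ∈ {0,...,2M}. In particular, for b = 3 any β ≥ 11/12 ≈ 0.917 causes every received signal to be swamped. -/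
/-- `b`-bit signed linear quantization with levels `y k = (k − M)/M`, `k = 0,…,2M`,
`M = 2^(b−1) − 1`, `b ≥ 3`: if the scale `Δ > 0` is unchanged and
`β ≥ 1 − 1/(4(2^(b−1) − 1))` with `β < 1`, then every stored index `q` and every signal
`|z| ≤ Δ` is swamped — the quantized EMA state remains unchanged.
(In particular, for `b = 3` any `β ≥ 11/12` suffices.) -/
theorem signal_swamping_signed_linear
    (b : ℕ) (hb : 3 ≤ b)
    (Δ : ℝ) (hΔ : 0 < Δ)
    (β : ℝ) (hβlo : 1 - 1 / (4 * ((2 : ℝ) ^ (b - 1) - 1)) ≤ β) (hβ1 : β < 1) :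
    ∀ q : ℕ, q ≤ 2 * (2 ^ (b - 1) - 1) →
      ∀ z : ℝ, |z| ≤ Δ →
        ∀ k : ℕ, k ≤ 2 * (2 ^ (b - 1) - 1) →
          |(β * (((q : ℝ) - ((2 : ℝ) ^ (b - 1) - 1)) / ((2 : ℝ) ^ (b - 1) - 1)) * Δ
                + (1 - β) * z) / Δ
              - ((q : ℝ) - ((2 : ℝ) ^ (b - 1) - 1)) / ((2 : ℝ) ^ (b - 1) - 1)|
            ≤ |(β * (((q : ℝ) - ((2 : ℝ) ^ (b - 1) - 1)) / ((2 : ℝ) ^ (b - 1) - 1)) * Δ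
                + (1 - β) * z) / Δ
              - ((k : ℝ) - ((2 : ℝ) ^ (b - 1) - 1)) / ((2 : ℝ) ^ (b - 1) - 1)| := by
  intro q hq z hz k hk
  set M : ℝ := (2 : ℝ) ^ (b - 1) - 1 with hM
  -- M ≥ 3
  have hM3 : (3 : ℝ) ≤ M := by
    have h1 : (2 : ℕ) ≤ b - 1 := by omega
    have : (2 : ℝ) ^ (2 : ℕ) ≤ (2 : ℝ) ^ (b - 1) :=
      pow_le_pow_right₀ (by norm_num) h1
    simp [hM]; nlinarith
  have hMpos : (0 : ℝ) < M := by linarith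
  -- cast of nat bound
  have hcast : ((2 ^ (b - 1) - 1 : ℕ) : ℝ) = M := by
    have h1 : (1 : ℕ) ≤ 2 ^ (b - 1) := Nat.one_le_two_pow
    push_cast [h1]
    simp [hM]
  have hqR : (q : ℝ) ≤ 2 * M := by
    have := (Nat.cast_le (α := ℝ)).2 hq
    push_cast at this
    rw [hcast] at this; linarith
  have hkR : (k : ℝ) ≤ 2 * M := by
    have := (Nat.cast_le (α := ℝ)).2 hk
    push_cast at this
    rw [hcast] at this; linarith
  set yq : ℝ := ((q : ℝ) - M) / M with hyq
  set yk : ℝ := ((k : ℝ) - M) / M with hyk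
  have hyq1 : |yq| ≤ 1 := by
    rw [hyq, abs_div, abs_of_pos hMpos, div_le_one hMpos]
    rw [abs_le]
    constructor <;> [nlinarith [Nat.cast_nonneg (α := ℝ) q]; nlinarith]
  -- simplify u - yq
  have hΔne : Δ ≠ 0 := ne_of_gt hΔ
  have hkey : (β * yq * Δ + (1 - β) * z) / Δ - yq = (1 - β) * (z / Δ - yq) := by
    field_simp; ring
  have hw : |z / Δ| ≤ 1 := by
    rw [abs_div, abs_of_pos hΔ, div_le_one hΔ]; exact hz
  have hβnn : 0 ≤ 1 - β := by linarith
  have hsmall : |(β * yq * Δ + (1 - β) * z) / Δ - yq| ≤ 1 / (2 * M) := by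
    rw [hkey, abs_mul, abs_of_nonneg hβnn]
    have h1 : |z / Δ - yq| ≤ 2 := by
      calc |z / Δ - yq| ≤ |z / Δ| + |yq| := abs_sub _ _
        _ ≤ 2 := by linarith
    have h2 : 1 - β ≤ 1 / (4 * M) := by linarith
    calc (1 - β) * |z / Δ - yq| ≤ (1 / (4 * M)) * 2 := by
          apply mul_le_mul h2 h1 (abs_nonneg _)
          positivity
      _ = 1 / (2 * M) := by field_simp; ring
  rcases eq_or_ne k q with rfl | hne
  · exact le_refl _
  · -- |yq - yk| ≥ 1/M
    have hgap : 1 / M ≤ |yq - yk| := by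
      have : yq - yk = ((q : ℝ) - (k : ℝ)) / M := by
        rw [hyq, hyk]; field_simp; ring
      rw [this, abs_div, abs_of_pos hMpos, le_div_iff₀ hMpos]
      have h1 : (1 : ℝ) ≤ |(q : ℝ) - (k : ℝ)| := by
        have : ((q : ℤ) : ℝ) - ((k : ℤ) : ℝ) = ((q : ℝ) - (k : ℝ)) := by push_cast; ring
        rw [← this, ← Int.cast_sub, ← Int.cast_abs]
        have : (1 : ℤ) ≤ |(q : ℤ) - (k : ℤ)| :=
          Int.one_le_abs (by omega)
        exact_mod_cast this
      calc 1 / M * M = 1 := by field_simp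
        _ ≤ |(q : ℝ) - (k : ℝ)| := h1
    set u : ℝ := (β * yq * Δ + (1 - β) * z) / Δ with hu
    have htri : |yq - yk| ≤ |u - yq| + |u - yk| := by
      calc |yq - yk| = |(u - yk) - (u - yq)| := by ring_nf
        _ ≤ |u - yk| + |u - yq| := abs_sub _ _
        _ = |u - yq| + |u - yk| := by ring
    have : 1 / (2 * M) ≤ |u - yk| := by
      have h12 : 1 / M = 1 / (2 * M) + 1 / (2 * M) := by field_simp; ring
      linarith
    linarith
end

section
/- Let β ∈ [0,1), let y_0 < y_1 < ... < y_N be strictly increasing quantization levels with maximum radius r_max = max_{k=1,...,N} (1/2)·(y_k − y_{k−1}), let Δ > 0, and let x̂ satisfy y_{k−1}·Δ ≤ x̂ ≤ y_k·Δ for some k. Let X̃ = Δ·Ỹ be the dequantized stochastic rounding of x̂, where Ỹ takes value y_{k−1} with probability (y_k − x̂/Δ)/(y_k − y_{k−1}) and y_k with probability (x̂/Δ − y_{k−1})/(y_k − y_{k−1}), and let g be a real random variable independent of X̃. Define g̃ = g + (β/(1−β))·(X̃ − x̂). Then Var[g̃] = Var[g] + (β/(1−β))²·Var[X̃], and Var[X̃]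 = (y_k − x̂/Δ)·(x̂/Δ − y_{k−1})·Δ² ≤ (1/4)·(y_k − y_{k−1})²·Δ² ≤ (r_max·Δ)², so that Var[g̃] ≤ Var[g] + ((β/(1−β))·r_max·Δ)². -/
open MeasureTheory ProbabilityTheory

lemma variance_const_add' {Ω : Type*} [MeasurableSpace Ω] (μ : Measure Ω)
    [IsProbabilityMeasure μ] (c : ℝ) (Z : Ω → ℝ) (hZ : Integrable Z μ) :
    variance (fun ω => c + Z ω) μ = variance Z μ := by
  have hm : (μ[fun ω => c + Z ω]) = c + μ[Z] := by
    rw [integral_add (integrable_const c) hZ, integral_const]; simp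
  have key : ∀ ω, c + Z ω - μ[fun ω => c + Z ω] = Z ω - μ[Z] := by
    intro ω; rw [hm]; ring
  rw [variance, variance, evariance, evariance]
  congr 1
  exact lintegral_congr fun ω => by rw [key]

set_option maxHeartbeats 1000000 in
/-- (Theorem: quantization errors amplify the gradient variance.)
Let `β ∈ [0,1)`, let `y 0 < y 1 < ... < y N` be strictly increasing quantization levels
with maximum radius `rmax = max_{1 ≤ j ≤ N} (y j − y (j−1))/2`, let `Δ > 0`, and let
`x̂ ∈ [y (k−1)·Δ, y k·Δ]`. Let `X = Δ·Ỹ` be the dequantized stochastic rounding of `x̂`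
(so `X = Δ·y (k−1)` w.p. `(y k − x̂/Δ)/(y k − y (k−1))` and `X = Δ·y k` w.p.
`(x̂/Δ − y (k−1))/(y k − y (k−1))`), and let `g` be a square-integrable real random
variable independent of `X`. With `g̃ = g + (β/(1−β))·(X − x̂)`:
`Var[g̃] = Var[g] + (β/(1−β))²·Var[X]`,
`Var[X] = (y k − x̂/Δ)·(x̂/Δ − y (k−1))·Δ² ≤ (1/4)·(y k − y (k−1))²·Δ² ≤ (rmax·Δ)²`,
hence `Var[g̃] ≤ Var[g] + ((β/(1−β))·rmax·Δ)²`. -/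
theorem quantized_ema_gradient_variance
    {Ω : Type*} [MeasurableSpace Ω] (μ : Measure Ω) [IsProbabilityMeasure μ]
    (β : ℝ) (hβ0 : 0 ≤ β) (hβ1 : β < 1)
    (N : ℕ) (y : ℕ → ℝ) (hmono : ∀ j, j < N → y j < y (j + 1))
    (rmax : ℝ)
    (hrmax : IsGreatest {r : ℝ | ∃ j, 1 ≤ j ∧ j ≤ N ∧ r = (y j - y (j - 1)) / 2} rmax)
    (Δ : ℝ) (hΔ : 0 < Δ)
    (k : ℕ) (hk1 : 1 ≤ k) (hkN : k ≤ N)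
    (xhat : ℝ) (hx0 : y (k - 1) * Δ ≤ xhat) (hx1 : xhat ≤ y k * Δ)
    (X g : Ω → ℝ) (hXmeas : Measurable X) (hgmeas : Measurable g)
    (hX0 : μ {ω | X ω = Δ * y (k - 1)}
        = ENNReal.ofReal ((y k - xhat / Δ) / (y k - y (k - 1))))
    (hX1 : μ {ω | X ω = Δ * y k}
        = ENNReal.ofReal ((xhat / Δ - y (k - 1)) / (y k - y (k - 1))))
    (hg2 : MemLp g 2 μ)
    (hindep : IndepFun g X μ) :
    variance (fun ω => g ω + (β / (1 - β)) * (X ω - xhat)) μ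
        = variance g μ + (β / (1 - β)) ^ 2 * variance X μ ∧
    variance X μ = (y k - xhat / Δ) * (xhat / Δ - y (k - 1)) * Δ ^ 2 ∧
    variance X μ ≤ (1 / 4) * (y k - y (k - 1)) ^ 2 * Δ ^ 2 ∧
    variance X μ ≤ (rmax * Δ) ^ 2 ∧
    variance (fun ω => g ω + (β / (1 - β)) * (X ω - xhat)) μ
        ≤ variance g μ + ((β / (1 - β)) * rmax * Δ) ^ 2 := by

  -- abbreviations
  set c : ℝ := β / (1 - β) with hc
  set a : ℝ := Δ * y (k - 1) with ha
  set b : ℝ := Δ * y k with hb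
  set d : ℝ := y k - y (k - 1) with hdd
  set p : ℝ := (y k - xhat / Δ) / d with hpdef
  set q : ℝ := (xhat / Δ - y (k - 1)) / d with hqdef
  clear_value c a b d p q
  have hy : y (k - 1) < y k := by
    have := hmono (k - 1) (by omega)
    rwa [show k - 1 + 1 = k by omega] at this
  have hd : 0 < d := by rw [hdd]; exact sub_pos.2 hy
  have hab : a < b := by
    rw [ha, hb]; exact mul_lt_mul_of_pos_left hy hΔ
  have hxu : xhat / Δ ≤ y k := (div_le_iff₀ hΔ).2 hx1
  have hxl : y (k - 1) ≤ xhat / Δ := (le_div_iff₀ hΔ).2 hx0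
  have hp0 : 0 ≤ p := by rw [hpdef]; exact div_nonneg (by linarith) hd.le
  have hq0 : 0 ≤ q := by rw [hqdef]; exact div_nonneg (by linarith) hd.le
  have hpq : p + q = 1 := by
    rw [hpdef, hqdef, ← add_div, show y k - xhat / Δ + (xhat / Δ - y (k - 1)) = d by
      rw [hdd]; ring]
    exact div_self hd.ne'
  -- the two events
  set A : Set Ω := {ω | X ω = a} with hA
  set B : Set Ω := {ω | X ω = b} with hB
  have hAmeas : MeasurableSet A := hXmeas (measurableSet_singleton a)
  have hBmeas : MeasurableSet B := hXmeas (measurableSet_singleton b)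
  have hμA : μ A = ENNReal.ofReal p := hX0
  have hμB : μ B = ENNReal.ofReal q := hX1
  have hdisj : Disjoint A B := by
    rw [Set.disjoint_left]
    intro ω hωA hωB
    exact hab.ne (hωA.symm.trans hωB)
  have hone : ENNReal.ofReal p + ENNReal.ofReal q = 1 := by
    rw [← ENNReal.ofReal_add hp0 hq0, hpq, ENNReal.ofReal_one]
  have hμAB : μ (A ∪ B) = 1 := by
    rw [measure_union hdisj hBmeas, hμA, hμB, hone]
  have hnull : μ ((A ∪ B)ᶜ) = 0 := by
    rw [measure_compl (hAmeas.union hBmeas) (measure_ne_top _ _), hμAB, measure_univ,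
      tsub_self]
  have hae : ∀ᵐ ω ∂μ, ω ∈ A ∪ B := by
    rw [ae_iff]
    exact hnull
  -- X is a.e. equal to an affine image of the indicator of B
  set I : Ω → ℝ := B.indicator (1 : Ω → ℝ) with hI
  set Y : Ω → ℝ := fun ω => a + (b - a) * I ω with hY
  have hXY : X =ᵐ[μ] Y := by
    filter_upwards [hae] with ω hω
    rcases hω with hω | hω
    · have hnB : ω ∉ B := fun hωB => hab.ne (hω.symm.trans hωB)
      have hI0 : I ω = 0 := Set.indicator_of_notMem hnB _
      show X ω = a + (b - a) * I ω
      rw [hI0, mul_zero, add_zero]; exact hω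
    · have hI1 : I ω = 1 := Set.indicator_of_mem hω _
      show X ω = a + (b - a) * I ω
      rw [hI1, mul_one]
      have : a + (b - a) = b := by ring
      rw [this]; exact hω
  have hImeas : Measurable I := measurable_const.indicator hBmeas
  have hIbdd : ∀ᵐ ω ∂μ, I ω ∈ Set.Icc (0 : ℝ) 1 := by
    refine ae_of_all _ fun ω => ?_
    by_cases h : ω ∈ B <;> simp [hI, Set.indicator_of_mem, Set.indicator_of_notMem, h]
  have hImem : MemLp I 2 μ := memLp_of_bounded hIbdd hImeas.aestronglyMeasurable 2
  have hIint : (μ[I]) = q := by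
    rw [hI, integral_indicator_one hBmeas, measureReal_def, hμB, ENNReal.toReal_ofReal hq0]
  have hI2 : ∀ ω, I ω ^ 2 = I ω := by
    intro ω
    by_cases h : ω ∈ B <;> simp [hI, Set.indicator_of_mem, Set.indicator_of_notMem, h]
  have hVarI : variance I μ = q - q ^ 2 := by
    rw [variance_eq_sub hImem]
    have : (μ[I ^ 2]) = q := by
      rw [show (I ^ 2 : Ω → ℝ) = I from funext fun ω => hI2 ω, hIint]
    rw [this, hIint]
  have hVarY : variance Y μ = (b - a) ^ 2 * (q - q ^ 2) := by
    have h1 : variance Y μ = variance (fun ω => (b - a) * I ω) μ := by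
      rw [hY]
      exact variance_const_add' μ a _ ((hImem.integrable one_le_two).const_mul _)
    rw [h1, variance_const_mul, hVarI]
  have hmeanXY : (μ[X]) = μ[Y] := integral_congr_ae hXY
  have hVarXY : variance X μ = variance Y μ := by
    rw [variance, variance, evariance, evariance]
    congr 1
    apply lintegral_congr_ae
    filter_upwards [hXY] with ω hω
    rw [hω, hmeanXY]
  have hVarX : variance X μ = (b - a) ^ 2 * (q - q ^ 2) := hVarXY.trans hVarY
  -- the exact value of Var X
  have hdp : d * p = y k - xhat / Δ := by
    rw [hpdef]; field_simp
  have hdq : d * q = xhat / Δ - y (k - 1) := by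
    rw [hqdef]; field_simp
  have hba : b - a = Δ * d := by rw [ha, hb, hdd]; ring
  have hVal : variance X μ = (y k - xhat / Δ) * (xhat / Δ - y (k - 1)) * Δ ^ 2 := by
    rw [hVarX, ← hdp, ← hdq, hba]
    linear_combination (-(Δ ^ 2 * d ^ 2 * q)) * hpq
  -- inequalities
  have hIneq1 : variance X μ ≤ (1 / 4) * d ^ 2 * Δ ^ 2 := by
    rw [hVal, hdd]
    have hu : 0 ≤ y k - xhat / Δ := by linarith
    have hv : 0 ≤ xhat / Δ - y (k - 1) := by linarith
    nlinarith [mul_nonneg (sq_nonneg ((y k - xhat / Δ) - (xhat / Δ - y (k - 1)))) (sq_nonneg Δ), hdd]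
  have hr : d / 2 ≤ rmax := by
    rw [hdd]; exact hrmax.2 ⟨k, hk1, hkN, rfl⟩
  have hIneq2 : (1 / 4) * d ^ 2 * Δ ^ 2 ≤ (rmax * Δ) ^ 2 := by
    have h1 : d ^ 2 ≤ (2 * rmax) ^ 2 := by nlinarith [hr, hd]
    have h2 : d ^ 2 * Δ ^ 2 ≤ (2 * rmax) ^ 2 * Δ ^ 2 :=
      mul_le_mul_of_nonneg_right h1 (sq_nonneg Δ)
    nlinarith [h2]
  -- variance of the effective gradient
  have hXbdd : ∀ᵐ ω ∂μ, X ω ∈ Set.Icc a b := by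
    filter_upwards [hae] with ω hω
    rcases hω with hω | hω
    · rw [hω]; exact ⟨le_refl a, hab.le⟩
    · rw [hω]; exact ⟨hab.le, le_refl b⟩
  have hX2 : MemLp X 2 μ := memLp_of_bounded hXbdd hXmeas.aestronglyMeasurable 2
  have hh2 : MemLp (fun ω => c * (X ω - xhat)) 2 μ :=
    (hX2.sub (memLp_const xhat)).const_mul c
  have hindep' : IndepFun g (fun ω => c * (X ω - xhat)) μ := by
    have hm : Measurable fun x : ℝ => c * (x - xhat) :=
      (measurable_id.sub measurable_const).const_mul c
    exact hindep.comp measurable_id hm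
  have hadd : variance (fun ω => g ω + c * (X ω - xhat)) μ
      = variance g μ + variance (fun ω => c * (X ω - xhat)) μ := by
    have := IndepFun.variance_add hg2 hh2 hindep'
    exact this
  have hVarh : variance (fun ω => c * (X ω - xhat)) μ = c ^ 2 * variance X μ := by
    rw [variance_const_mul]
    congr 1
    rw [show (fun ω => X ω - xhat) = fun ω => -xhat + X ω from funext fun ω => by ring]
    exact variance_const_add' μ (-xhat) X (hX2.integrable one_le_two)
  have hEq : variance (fun ω => g ω + c * (X ω - xhat)) μ
      = variance g μ + c ^ 2 * variance X μ := by rw [hadd, hVarh]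
  refine ⟨hEq, hVal, hIneq1, le_trans hIneq1 hIneq2, ?_⟩
  rw [hEq]
  have hc2 : 0 ≤ c ^ 2 := sq_nonneg c
  nlinarith [le_trans hIneq1 hIneq2, hc2]
end
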